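/- Let P be a finite metacyclic 2-group and let Q be a normal subgroup of P with Q isomorphic to C_{2^k} × C_{2^k} for some k ≥ 1, such that |P : Q| = 2 and the conjugation action of P/Q on Q/Φ(Q) is faithful. Then the quotient P/Φ(Q) is isomorphic to the dihedral group of order 8. -/

import Mathlib

section AuxDihedral
open Subgroup

lemma sq_mem_frattini {Q : Type*} [Group Q] [Finite Q] (h2 : IsPGroup 2 Q)
    (hcomm : ∀ a b : Q, a * b = b * a) (q : Q) : q * q ∈ frattini Q := by
  have hmem : ∀ M : Subgroup Q, IsCoatom M → q * q ∈ M := by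
    intro M hM
    haveI : M.Normal := ⟨fun n hn g => by
      rw [hcomm g n, mul_assoc, mul_inv_cancel, mul_one]; exact hn⟩
    haveI : Fact (Nat.Prime 2) := ⟨Nat.prime_two⟩
    have hpq : IsPGroup 2 (Q ⧸ M) := h2.to_quotient M
    obtain ⟨m, hm⟩ := IsPGroup.exists_card_eq hpq
    -- the quotient is nontrivial
    obtain ⟨x, hx⟩ : ∃ x : Q, x ∉ M := by
      by_contra h
      push_neg at h
      exact hM.1 ((Subgroup.eq_top_iff' M).mpr h)
    have hx1 : (QuotientGroup.mk' M) x ≠ 1 := by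
      simpa [QuotientGroup.eq_one_iff] using hx
    have hm1 : 1 ≤ m := by
      rcases Nat.eq_zero_or_pos m with h0 | h1
      · exfalso
        rw [h0, pow_zero] at hm
        haveI : Subsingleton (Q ⧸ M) := Nat.card_eq_one_iff_unique.mp hm |>.1
        exact hx1 (Subsingleton.elim _ _)
      · exact h1
    have hcard2 : Nat.card (Q ⧸ M) = 2 := by
      by_contra hne
      have hm2 : 2 ≤ m := by
        rcases Nat.lt_or_ge m 2 with h | h
        · interval_cases m
          · exact absurd hm hne
        · exact h
      -- get an element of order 2 in the quotient
      obtain ⟨g, hg⟩ := exists_prime_orderOf_dvd_card' (G := Q ⧸ M) 2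
        (by rw [hm]; exact dvd_pow_self 2 (by omega))
      have hgne : g ≠ 1 := by
        intro h; rw [h, orderOf_one] at hg; omega
      set K := (Subgroup.zpowers g).comap (QuotientGroup.mk' M) with hK
      have hMK : M ≤ K := fun y hy => by
        have : (QuotientGroup.mk' M) y = 1 := (QuotientGroup.eq_one_iff y).mpr hy
        simp [hK, Subgroup.mem_comap, this, Subgroup.one_mem]
      have hlt : M < K := by
        obtain ⟨y, hy⟩ := QuotientGroup.mk'_surjective M g
        refine lt_of_le_of_ne hMK (fun h => ?_)
        have hyK : y ∈ K := by simp [hK, Subgroup.mem_comap, hy, Subgroup.mem_zpowers]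
        rw [← h] at hyK
        exact hgne (by rw [← hy]; exact (QuotientGroup.eq_one_iff y).mpr hyK)
      have hKtop : K = ⊤ := hM.2 K hlt
      have : Subgroup.zpowers g = ⊤ := by
        have := Subgroup.map_comap_eq_self_of_surjective
          (QuotientGroup.mk'_surjective M) (Subgroup.zpowers g)
        rw [← hK, hKtop] at this
        rw [← this]
        exact (Subgroup.map_top_of_surjective _ (QuotientGroup.mk'_surjective M)).symm ▸ rfl
      have hcards : Nat.card (Q ⧸ M) = 2 := by
        rw [← Subgroup.card_top (G := Q ⧸ M), ← this, Nat.card_zpowers]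
        exact hg
      exact hne hcards
    -- now the quotient has order 2, so squares vanish
    have : ((QuotientGroup.mk' M) q) ^ 2 = 1 := by
      rw [← hcard2]; exact pow_card_eq_one'
    have : (QuotientGroup.mk' M) (q * q) = 1 := by
      rw [map_mul, ← sq]; exact this
    exact (QuotientGroup.eq_one_iff _).mp this
  -- conclude membership in the Frattini subgroup
  have : frattini Q = ⨅ M ∈ {H : Subgroup Q | IsCoatom H}, M := rfl
  rw [this]
  simp only [Subgroup.mem_iInf]
  exact fun M hM => hmem M hM

lemma frattini_map_subtype_normal {P : Type*} [Group P] (Q : Subgroup P) [Q.Normal] :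
    ((frattini ↥Q).map Q.subtype).Normal := by
  constructor
  intro n hn g
  obtain ⟨m, hm, rfl⟩ := hn
  have hfix := Subgroup.characteristic_iff_comap_eq.mp
    (frattini_characteristic (G := ↥Q)) (MulAut.conjNormal g)
  have hmem : MulAut.conjNormal g m ∈ frattini ↥Q := by
    rw [← hfix] at hm
    exact hm
  refine ⟨MulAut.conjNormal g m, hmem, ?_⟩
  exact MulAut.conjNormal_apply g m

lemma eq_of_ne_one_of_card_two {X : Type*} [Group X] (hX : Nat.card X = 2)
    {u v : X} (hu : u ≠ 1) (hv : v ≠ 1) : u = v := by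
  haveI : Finite X := Nat.finite_of_card_ne_zero (by omega)
  have hu2 : u ^ 2 = 1 := by rw [← hX]; exact pow_card_eq_one'
  have hord : orderOf u = 2 := by
    have h1 : orderOf u ∣ 2 := orderOf_dvd_of_pow_eq_one hu2
    rcases (Nat.dvd_prime Nat.prime_two).mp h1 with h | h
    · exact absurd (orderOf_eq_one_iff.mp h) hu
    · exact h
  have htop : Subgroup.zpowers u = ⊤ := by
    apply Subgroup.eq_top_of_card_eq
    rw [Nat.card_zpowers, hord, hX]
  have hv' : v ∈ Subgroup.zpowers u := htop ▸ Subgroup.mem_top v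
  obtain ⟨k, hk⟩ := Subgroup.mem_zpowers_iff.mp hv'
  have hz : u ^ (2 : ℤ) = 1 := by
    rw [show ((2:ℤ)) = ((2:ℕ):ℤ) by norm_num, zpow_natCast, hu2]
  rcases Int.even_or_odd k with ⟨m, hm⟩ | ⟨m, hm⟩
  · exfalso
    apply hv
    rw [← hk, hm, ← two_mul, zpow_mul, hz, one_zpow]
  · rw [← hk, hm, zpow_add, zpow_mul, hz, one_zpow, one_mul, zpow_one]


lemma eq_of_ne_one_of_card_two' {X : Type*} [Group X] (hX : Nat.card X = 2)
    {u v : X} (hu : u ≠ 1) (hv : v ≠ 1) : u = v := by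
  haveI : Finite X := Nat.finite_of_card_ne_zero (by omega)
  have hu2 : u ^ 2 = 1 := by rw [← hX]; exact pow_card_eq_one'
  have hord : orderOf u = 2 := by
    have h1 : orderOf u ∣ 2 := orderOf_dvd_of_pow_eq_one hu2
    rcases (Nat.dvd_prime Nat.prime_two).mp h1 with h | h
    · exact absurd (orderOf_eq_one_iff.mp h) hu
    · exact h
  have htop : Subgroup.zpowers u = ⊤ := by
    apply Subgroup.eq_top_of_card_eq
    rw [Nat.card_zpowers, hord, hX]
  have hv' : v ∈ Subgroup.zpowers u := htop ▸ Subgroup.mem_top v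
  obtain ⟨k, hk⟩ := Subgroup.mem_zpowers_iff.mp hv'
  have hz : u ^ (2 : ℤ) = 1 := by
    rw [show ((2:ℤ)) = ((2:ℕ):ℤ) by norm_num, zpow_natCast, hu2]
  rcases Int.even_or_odd k with ⟨m, hm⟩ | ⟨m, hm⟩
  · exfalso
    apply hv
    rw [← hk, hm, ← two_mul, zpow_mul, hz, one_zpow]
  · rw [← hk, hm, zpow_add, zpow_mul, hz, one_zpow, one_mul, zpow_one]

lemma dihedral_of_klein {G : Type*} [Group G] (V : Subgroup G) [hVn : V.Normal]
    (hVsq : ∀ v ∈ V, v * v = 1)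
    (hVcomm : ∀ u ∈ V, ∀ v ∈ V, u * v = v * u)
    (hidx2 : Nat.card (G ⧸ V) = 2)
    (x y : G)
    (hVset : ∀ v ∈ V, v = 1 ∨ v = x ∨ v = y ∨ v = x * y)
    (t : G) (ht : t ∉ V) (a : G) (ha : a ∈ V) (hab : t * a * t⁻¹ ≠ a) :
    Nonempty (G ≃* DihedralGroup 4) := by
  classical
  have ha1 : a ≠ 1 := by rintro rfl; simp at hab
  obtain ⟨b, hbdef⟩ : ∃ b, t * a * t⁻¹ = b := ⟨_, rfl⟩
  rw [hbdef] at hab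
  have hbV : b ∈ V := hbdef ▸ hVn.conj_mem a ha t
  have hb1 : b ≠ 1 := by
    intro h
    apply ha1
    have h2 : t * a * t⁻¹ = 1 := hbdef.trans h
    have h3 := congrArg (fun z => t⁻¹ * z * t) h2
    simpa [mul_assoc] using h3
  have hba : b ≠ a := hab
  obtain ⟨w, hwdef⟩ : ∃ w, a * b = w := ⟨_, rfl⟩
  have hwV : w ∈ V := hwdef ▸ mul_mem ha hbV
  have hainv : a⁻¹ = a := inv_eq_of_mul_eq_one_right (hVsq a ha)
  have hbinv : b⁻¹ = b := inv_eq_of_mul_eq_one_right (hVsq b hbV)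
  have hw1 : w ≠ 1 := by
    intro h
    apply hba
    have h1 : a * (a * b) = a * 1 := by rw [hwdef, h]
    rwa [← mul_assoc, hVsq a ha, one_mul, mul_one] at h1
  have hwa : w ≠ a := by
    intro h
    apply hb1
    have h1 : a * b = a * 1 := by rw [hwdef, h, mul_one]
    exact mul_left_cancel h1
  have hwb : w ≠ b := by
    intro h
    apply ha1
    have h1 : a * b = 1 * b := by rw [hwdef, h, one_mul]
    exact mul_right_cancel h1
  -- V is exactly {1, a, b, w}
  have hVmem : ∀ v ∈ V, v = 1 ∨ v = a ∨ v = b ∨ v = w := by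
    have key : ∀ u, u ∈ V → u ≠ 1 → (u = x ∨ u = y ∨ u = x * y) := by
      intro u hu hu1
      rcases hVset u hu with h | h | h | h
      · exact absurd h hu1
      · exact Or.inl h
      · exact Or.inr (Or.inl h)
      · exact Or.inr (Or.inr h)
    have hTS : ({1, a, b, w} : Finset G) = ({1, x, y, x * y} : Finset G) := by
      apply Finset.eq_of_subset_of_card_le
      · intro z hz
        simp only [Finset.mem_insert, Finset.mem_singleton] at hz ⊢
        rcases hz with h | h | h | h
        · exact Or.inl h
        · rw [h]; exact Or.inr (key a ha ha1)
        · rw [h]; exact Or.inr (key b hbV hb1)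
        · rw [h]; exact Or.inr (key w hwV hw1)
      · have hc4 : ({1, a, b, w} : Finset G).card = 4 := by
          rw [Finset.card_insert_of_notMem (by simp [Ne.symm ha1, Ne.symm hb1, Ne.symm hw1]),
            Finset.card_insert_of_notMem (by simp [Ne.symm hba, Ne.symm hwa]),
            Finset.card_insert_of_notMem (by simp [Ne.symm hwb]), Finset.card_singleton]
        rw [hc4]
        apply le_trans (Finset.card_insert_le _ _)
        simp only [Nat.succ_le_succ_iff]
        apply le_trans (Finset.card_insert_le _ _)
        simp only [Nat.succ_le_succ_iff]
        apply le_trans (Finset.card_insert_le _ _)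
        simp [Nat.succ_le_succ_iff]
    intro v hv
    have hvmem : v ∈ ({1, x, y, x * y} : Finset G) := by
      simp only [Finset.mem_insert, Finset.mem_singleton]
      rcases hVset v hv with h | h | h | h
      · exact Or.inl h
      · exact Or.inr (Or.inl h)
      · exact Or.inr (Or.inr (Or.inl h))
      · exact Or.inr (Or.inr (Or.inr h))
    rw [← hTS] at hvmem
    simpa only [Finset.mem_insert, Finset.mem_singleton] using hvmem
  -- t * t lies in V
  have ht2 : t * t ∈ V := by
    have h1 : ((t : G) : G ⧸ V) ^ 2 = 1 := by
      rw [← hidx2]; exact pow_card_eq_one'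
    have h2 : ((t * t : G) : G ⧸ V) = 1 := by rw [← h1, pow_two]; rfl
    exact (QuotientGroup.eq_one_iff _).mp h2
  -- conjugation by t sends b back to a
  have hconjb : t * b * t⁻¹ = a := by
    have hcomm' : (t * t) * a = a * (t * t) := hVcomm (t * t) ht2 a ha
    have h1 : t * b * t⁻¹ = (t * t) * a * (t * t)⁻¹ := by rw [← hbdef]; group
    rw [h1, hcomm', mul_assoc, mul_inv_cancel, mul_one]
  -- t * t is 1 or w
  have ht2w : t * t = 1 ∨ t * t = w := by
    rcases hVmem (t * t) ht2 with h | h | h | h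
    · exact Or.inl h
    · exfalso
      apply hba
      have hc := hbdef
      rw [← h] at hc
      have h2 : t * (t * t) * t⁻¹ = t * t := by group
      rw [h2, h] at hc
      exact hc.symm
    · exfalso
      apply hba
      have hc := hconjb
      rw [← h] at hc
      have h2 : t * (t * t) * t⁻¹ = t * t := by group
      rw [h2, h] at hc
      exact hc
    · exact Or.inr h
  -- choose the reflection S
  obtain ⟨S, hSV, hS2, hSa⟩ : ∃ S : G, S ∉ V ∧ S * S = 1 ∧ S * a * S⁻¹ = b := by
    rcases ht2w with h | h
    · exact ⟨t, ht, h, hbdef⟩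
    · refine ⟨t * a, ?_, ?_, ?_⟩
      · intro hmem
        apply ht
        have h1 : (t * a) * a⁻¹ ∈ V := mul_mem hmem (inv_mem ha)
        simpa [mul_assoc] using h1
      · have e1 : (t * a) * (t * a) = (t * a * t⁻¹) * (t * t) * a := by group
        rw [e1, hbdef, h, ← hwdef]
        have hcab : a * b = b * a := hVcomm a ha b hbV
        calc b * (a * b) * a = b * (b * a) * a := by rw [hcab]
          _ = (b * b) * (a * a) := by group
          _ = 1 := by rw [hVsq b hbV, hVsq a ha, one_mul]
      · have e1 : (t * a) * a * (t * a)⁻¹ = t * a * t⁻¹ := by group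
        rw [e1]; exact hbdef
  have hSinv : S⁻¹ = S := inv_eq_of_mul_eq_one_right hS2
  have hS1 : S ≠ 1 := fun h => hSV (h ▸ one_mem V)
  obtain ⟨R, hRdef⟩ : ∃ R, S * a = R := ⟨_, rfl⟩
  have hR2 : R * R = w := by
    rw [← hRdef]
    have e1 : (S * a) * (S * a) = (S * a * S⁻¹) * (S * S) * a := by group
    rw [e1, hSa, hS2, mul_one, ← hwdef, hVcomm a ha b hbV]
  have hR4 : R ^ 4 = 1 := by
    have e1 : R ^ 4 = (R * R) * (R * R) := by
      rw [pow_succ, pow_succ, pow_succ, pow_one, mul_assoc (R * R)]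
    rw [e1, hR2]; exact hVsq w hwV
  have hRS : R * S = S * R⁻¹ := by
    rw [← hRdef, mul_inv_rev, hainv, hSinv, mul_assoc]
  have hpow : ∀ n : ℕ, R ^ n * S = S * (R⁻¹) ^ n := by
    intro n
    induction n with
    | zero => simp
    | succ n ih =>
      rw [pow_succ, pow_succ, mul_assoc, hRS, ← mul_assoc, ih, mul_assoc]
  have hfS : ∀ m : ℕ, R ^ m * S = S * (R ^ m)⁻¹ := fun m => by rw [hpow m, inv_pow]
  -- the power map
  have hR1 : R ≠ 1 := by intro h; apply hw1; rw [← hR2, h, one_mul]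
  have hRRne : R * R ≠ 1 := by rw [hR2]; exact hw1
  set f : ZMod 4 → G := fun i => R ^ i.val with hfdef
  have hf_add : ∀ i j : ZMod 4, f (i + j) = f i * f j := by
    intro i j
    show R ^ (i + j).val = R ^ i.val * R ^ j.val
    rw [ZMod.val_add, ← pow_add]
    exact (pow_eq_pow_mod _ hR4).symm
  have hf_sub : ∀ i j : ZMod 4, f (j - i) = f j * (f i)⁻¹ := by
    intro i j
    have h1 := hf_add (j - i) i
    rw [sub_add_cancel] at h1
    exact eq_mul_inv_of_mul_eq h1.symm
  have hcommf : ∀ i j : ZMod 4, Commute (f i) (f j) := by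
    intro i j
    show f i * f j = f j * f i
    rw [← hf_add, ← hf_add, add_comm]
  have hfS' : ∀ i : ZMod 4, f i * S = S * (f i)⁻¹ := fun i => hfS i.val
  -- the homomorphism from the dihedral group
  set φfun : DihedralGroup 4 → G := fun z =>
    match z with
    | DihedralGroup.r i => f i
    | DihedralGroup.sr i => S * f i
    with hφdef
  have hφmul : ∀ z1 z2, φfun (z1 * z2) = φfun z1 * φfun z2 := by
    intro z1 z2
    rcases z1 with i | i <;> rcases z2 with j | j
    · rw [DihedralGroup.r_mul_r]
      exact hf_add i j
    · rw [DihedralGroup.r_mul_sr]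
      show S * f (j - i) = f i * (S * f j)
      calc S * f (j - i) = S * (f j * (f i)⁻¹) := by rw [hf_sub]
        _ = S * ((f i)⁻¹ * f j) := by rw [← ((hcommf i j).inv_left).eq]
        _ = (S * (f i)⁻¹) * f j := by rw [mul_assoc]
        _ = (f i * S) * f j := by rw [hfS' i]
        _ = f i * (S * f j) := by rw [mul_assoc]
    · rw [DihedralGroup.sr_mul_r]
      show S * f (i + j) = (S * f i) * f j
      rw [hf_add, mul_assoc]
    · rw [DihedralGroup.sr_mul_sr]
      show f (j - i) = (S * f i) * (S * f j)
      symm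
      calc (S * f i) * (S * f j) = S * ((f i * S) * f j) := by group
        _ = S * ((S * (f i)⁻¹) * f j) := by rw [hfS' i]
        _ = (S * S) * ((f i)⁻¹ * f j) := by group
        _ = (f i)⁻¹ * f j := by rw [hS2, one_mul]
        _ = f j * (f i)⁻¹ := ((hcommf i j).inv_left).eq
        _ = f (j - i) := (hf_sub i j).symm
  set φ : DihedralGroup 4 →* G := MonoidHom.mk' φfun hφmul with hφ
  have hv0 : (0 : ZMod 4).val = 0 := by decide
  have hv1 : (1 : ZMod 4).val = 1 := by decide
  have hv2 : (2 : ZMod 4).val = 2 := by decide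
  have hv3 : (3 : ZMod 4).val = 3 := by decide
  have hinj : Function.Injective φ := by
    rw [injective_iff_map_eq_one]
    intro z hz
    rcases z with i | i
    · have hz' : R ^ i.val = 1 := hz
      have hlt : i.val < 4 := ZMod.val_lt i
      have h4 : i.val = 0 ∨ i.val = 1 ∨ i.val = 2 ∨ i.val = 3 := by omega
      rcases h4 with h | h | h | h
      · have h0 : i = 0 := by
          have := (ZMod.val_eq_zero i).mp h
          exact this
        rw [h0, ← DihedralGroup.one_def]
      · rw [h, pow_one] at hz'; exact absurd hz' hR1
      · exfalso
        rw [h] at hz'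
        apply hRRne
        rw [← pow_two]; exact hz'
      · exfalso
        rw [h] at hz'
        apply hR1
        have h4' : R ^ 4 = R ^ 3 * R := by rw [pow_succ]
        rw [hz', one_mul, hR4] at h4'
        exact h4'.symm
    · exfalso
      have hz' : S * R ^ i.val = 1 := hz
      have hlt : i.val < 4 := ZMod.val_lt i
      have h4 : i.val = 0 ∨ i.val = 1 ∨ i.val = 2 ∨ i.val = 3 := by omega
      rcases h4 with h | h | h | h
      · rw [h, pow_zero, mul_one] at hz'; exact hS1 hz'
      · rw [h, pow_one] at hz'
        apply ha1
        rwa [← hRdef, ← mul_assoc, hS2, one_mul] at hz'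
      · rw [h] at hz'
        apply hSV
        have h1 : S = (R ^ 2)⁻¹ := eq_inv_of_mul_eq_one_left hz'
        rw [h1, pow_two, hR2]
        exact inv_mem hwV
      · rw [h] at hz'
        apply ha1
        have h1 : S * R ^ 3 * R = 1 * R := by rw [hz']
        rw [mul_assoc, ← pow_succ, hR4, mul_one, one_mul] at h1
        rw [← hRdef] at h1
        have h2 : S * 1 = S * a := by rw [mul_one]; exact h1
        exact (mul_left_cancel h2).symm
  -- auxiliary images
  have himg_a : S * R = a := by rw [← hRdef, ← mul_assoc, hS2, one_mul]
  have himg_b : S * R ^ 3 = b := by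
    have e1 : S * R ^ 3 = (S * R) * (R * R) := by
      rw [pow_succ, pow_two]
      simp [mul_assoc]
    rw [e1, himg_a, hR2, ← hwdef, ← mul_assoc, hVsq a ha, one_mul]
  have hsurj : Function.Surjective φ := by
    intro g
    by_cases hgV : g ∈ V
    · rcases hVmem g hgV with h | h | h | h
      · exact ⟨DihedralGroup.r 0, by show f 0 = g; rw [h]; show R ^ (0:ZMod 4).val = 1; rw [hv0, pow_zero]⟩
      · refine ⟨DihedralGroup.sr 1, ?_⟩
        show S * f 1 = g
        rw [h]
        show S * R ^ (1:ZMod 4).val = a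
        rw [hv1, pow_one, himg_a]
      · refine ⟨DihedralGroup.sr 3, ?_⟩
        show S * f 3 = g
        rw [h]
        show S * R ^ (3:ZMod 4).val = b
        rw [hv3, himg_b]
      · refine ⟨DihedralGroup.r 2, ?_⟩
        show f 2 = g
        rw [h]
        show R ^ (2:ZMod 4).val = w
        rw [hv2, pow_two, hR2]
    · have hmkS : ((S : G) : G ⧸ V) ≠ 1 := fun h => hSV ((QuotientGroup.eq_one_iff S).mp h)
      have hmkg : ((g : G) : G ⧸ V) ≠ 1 := fun h => hgV ((QuotientGroup.eq_one_iff g).mp h)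
      have heq : ((S : G) : G ⧸ V) = ((g : G) : G ⧸ V) :=
        eq_of_ne_one_of_card_two' hidx2 hmkS hmkg
      have hv : S⁻¹ * g ∈ V := QuotientGroup.eq.mp heq
      have hgSv : g = S * (S⁻¹ * g) := by rw [← mul_assoc, mul_inv_cancel, one_mul]
      rcases hVmem _ hv with h | h | h | h
      · refine ⟨DihedralGroup.sr 0, ?_⟩
        show S * f 0 = g
        rw [hgSv, h, mul_one]
        show S * R ^ (0:ZMod 4).val = S
        rw [hv0, pow_zero, mul_one]
      · refine ⟨DihedralGroup.r 1, ?_⟩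
        show f 1 = g
        rw [hgSv, h, hRdef]
        show R ^ (1:ZMod 4).val = R
        rw [hv1, pow_one]
      · refine ⟨DihedralGroup.r 3, ?_⟩
        show f 3 = g
        rw [hgSv, h, ← himg_b, ← mul_assoc, hS2, one_mul]
        show R ^ (3:ZMod 4).val = R ^ 3
        rw [hv3]
      · refine ⟨DihedralGroup.sr 2, ?_⟩
        show S * f 2 = g
        rw [hgSv, h]
        show S * R ^ (2:ZMod 4).val = S * w
        rw [hv2, pow_two, hR2]
  exact ⟨(MulEquiv.ofBijective φ ⟨hinj, hsurj⟩).symm⟩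

end AuxDihedral


/-- A group is *metacyclic* if it has a cyclic normal subgroup with cyclic quotient. -/
def IsMetacyclic (P : Type*) [Group P] : Prop :=
  ∃ (N : Subgroup P) (hN : N.Normal), IsCyclic N ∧
    letI := hN
    IsCyclic (P ⧸ N)

/-- A group is *homocyclic* if it is a direct product of two isomorphic cyclic groups. -/
def IsHomocyclic (P : Type*) [Group P] : Prop :=
  ∃ n : ℕ, Nonempty (P ≃* (Multiplicative (ZMod n) × Multiplicative (ZMod n)))

/-- A finite `2`-group of order `2 ^ n` has *maximal class* if its nilpotency class is `n - 1`;
these are exactly the dihedral, semidihedral and generalized quaternion groups of order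
at least `8` (so `n ≥ 3`).  The nilpotency class equals `n - 1` iff the `(n-1)`-st term of the
lower central series is trivial while the `(n-2)`-nd is not. -/
def IsMaximalClassTwoGroup (P : Type*) [Group P] : Prop :=
  ∃ n : ℕ, 3 ≤ n ∧ Nat.card P = 2 ^ n ∧
    (⊤ : Subgroup P).lowerCentralSeries (n - 1) = ⊥ ∧ (⊤ : Subgroup P).lowerCentralSeries (n - 2) ≠ ⊥

/-- A group is *2-nilpotent* if it has a normal subgroup of odd order whose quotient
is a `2`-group (a normal `2`-complement). -/
def IsTwoNilpotent (G : Type*) [Group G] : Prop :=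
  ∃ (N : Subgroup G) (hN : N.Normal), Odd (Nat.card N) ∧
    letI := hN
    IsPGroup 2 (G ⧸ N)

/-- Let `P` be a finite metacyclic 2-group with a normal subgroup `Q ≅ C_{2^k} × C_{2^k}`
(`k ≥ 1`) of index 2 such that the conjugation action of `P/Q` on `Q/Φ(Q)` is faithful
(any element of `P` acting trivially on `Q/Φ(Q)` lies in `Q`).  Then `P/Φ(Q)` is a dihedral
group of order 8. -/
theorem quotient_frattini_dihedral (P : Type*) [Group P] [Finite P]
    (h2 : IsPGroup 2 P) (hmeta : IsMetacyclic P)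
    (Q : Subgroup P) [Q.Normal] (k : ℕ) (hk : 1 ≤ k)
    (hQ : Nonempty (↥Q ≃* (Multiplicative (ZMod (2 ^ k)) × Multiplicative (ZMod (2 ^ k)))))
    (hidx : Q.index = 2)
    (hfaithful : ∀ x : P,
      (∀ q ∈ Q, x * q * x⁻¹ * q⁻¹ ∈ (frattini ↥Q).map Q.subtype) → x ∈ Q) :
    Nonempty ((P ⧸ (frattini ↥Q).map Q.subtype) ≃* DihedralGroup 4) := by
  obtain ⟨e⟩ := hQ
  haveI : NeZero (2 ^ k) := ⟨(Nat.two_pow_pos k).ne'⟩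
  have hQcomm : ∀ a b : ↥Q, a * b = b * a := by
    intro a b
    apply e.injective
    rw [map_mul, map_mul, mul_comm]
  set F := (frattini ↥Q).map Q.subtype with hFdef
  haveI hFn : F.Normal := frattini_map_subtype_normal Q
  have hFQ : F ≤ Q := Subgroup.map_subtype_le _
  have h2Q : IsPGroup 2 ↥Q := h2.to_subgroup Q
  have hsq : ∀ q : ↥Q, (q : P) * (q : P) ∈ F := by
    intro q
    have h1 : q * q ∈ frattini ↥Q := sq_mem_frattini h2Q hQcomm q
    exact ⟨q * q, h1, rfl⟩
  set π := QuotientGroup.mk' F with hπ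
  have hπker : π.ker = F := QuotientGroup.ker_mk' F
  have hπsurj : Function.Surjective π := QuotientGroup.mk'_surjective F
  set V := Q.map π with hV
  haveI hVn : V.Normal := Subgroup.Normal.map ‹Q.Normal› π hπsurj
  have hVsq : ∀ v ∈ V, v * v = 1 := by
    rintro v ⟨q, hq, rfl⟩
    rw [← map_mul]
    have h1 : q * q ∈ F := hsq ⟨q, hq⟩
    rw [← hπker] at h1
    exact h1
  have hVcomm : ∀ u ∈ V, ∀ v ∈ V, u * v = v * u := by
    rintro u ⟨q1, hq1, rfl⟩ v ⟨q2, hq2, rfl⟩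
    rw [← map_mul, ← map_mul]
    have h1 : q1 * q2 = q2 * q1 := congrArg Subtype.val (hQcomm ⟨q1, hq1⟩ ⟨q2, hq2⟩)
    rw [h1]
  have hVidx : V.index = 2 := by
    have h1 := Subgroup.index_comap_of_surjective V hπsurj
    have h2' : V.comap π = Q := by
      rw [hV, Subgroup.comap_map_eq, hπker, sup_eq_left.mpr hFQ]
    rw [h2'] at h1
    rw [← h1, hidx]
  have hVcard2 : Nat.card ((P ⧸ F) ⧸ V) = 2 := by
    rw [← Subgroup.index_eq_card, hVidx]
  -- generators of Q
  set g1 : ↥Q := e.symm (Multiplicative.ofAdd (1 : ZMod (2 ^ k)), 1) with hg1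
  set g2 : ↥Q := e.symm (1, Multiplicative.ofAdd (1 : ZMod (2 ^ k))) with hg2
  have key : ∀ u : Multiplicative (ZMod (2 ^ k)),
      (Multiplicative.ofAdd (1 : ZMod (2 ^ k))) ^ (Multiplicative.toAdd u).val = u := by
    intro u
    rw [← ofAdd_nsmul, nsmul_eq_mul, mul_one, ZMod.natCast_rightInverse _, ofAdd_toAdd]
  have hgen : ∀ q : ↥Q, q = g1 ^ ((Multiplicative.toAdd (e q).1).val) *
      g2 ^ ((Multiplicative.toAdd (e q).2).val) := by
    intro q
    rw [hg1, hg2, ← map_pow, ← map_pow, ← map_mul, MulEquiv.eq_symm_apply]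
    refine Prod.ext_iff.mpr ⟨?_, ?_⟩
    · rw [Prod.fst_mul, Prod.pow_fst, Prod.pow_fst, one_pow, mul_one, key]
    · rw [Prod.snd_mul, Prod.pow_snd, Prod.pow_snd, one_pow, one_mul, key]
  set x0 := π (g1 : P) with hx0
  set y0 := π (g2 : P) with hy0
  have hx0V : x0 ∈ V := ⟨(g1 : P), g1.2, rfl⟩
  have hy0V : y0 ∈ V := ⟨(g2 : P), g2.2, rfl⟩
  have hx0sq : x0 * x0 = 1 := hVsq x0 hx0V
  have hy0sq : y0 * y0 = 1 := hVsq y0 hy0V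
  have hpowdich : ∀ (X : P ⧸ F), X * X = 1 → ∀ m : ℕ, X ^ m = 1 ∨ X ^ m = X := by
    intro X hX m
    have hX2 : X ^ 2 = 1 := by rw [pow_two]; exact hX
    rcases Nat.even_or_odd m with ⟨c, hc⟩ | ⟨c, hc⟩
    · left; rw [hc, ← two_mul, pow_mul, hX2, one_pow]
    · right; rw [hc, pow_add, pow_mul, hX2, one_pow, pow_one, one_mul]
  have hVset : ∀ v ∈ V, v = 1 ∨ v = x0 ∨ v = y0 ∨ v = x0 * y0 := by
    rintro v ⟨q, hq, rfl⟩
    obtain ⟨m, n, hmn⟩ : ∃ m n : ℕ, (q : P) = (g1 : P) ^ m * (g2 : P) ^ n := by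
      have h := congrArg Subtype.val (hgen ⟨q, hq⟩)
      push_cast at h
      exact ⟨_, _, h⟩
    have hπq : π q = x0 ^ m * y0 ^ n := by
      rw [hmn, map_mul, map_pow, map_pow]
    rcases hpowdich x0 hx0sq m with h1 | h1 <;> rcases hpowdich y0 hy0sq n with h2 | h2
    · left; rw [hπq, h1, h2, one_mul]
    · right; right; left; rw [hπq, h1, h2, one_mul]
    · right; left; rw [hπq, h1, h2, mul_one]
    · right; right; right; rw [hπq, h1, h2]
  -- an element outside Q
  obtain ⟨p0, hp0⟩ : ∃ p0 : P, p0 ∉ Q := by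
    by_contra h
    push_neg at h
    have htop : Q = ⊤ := (Subgroup.eq_top_iff' Q).mpr h
    rw [htop, Subgroup.index_top] at hidx
    omega
  have htV : π p0 ∉ V := by
    intro hmem
    obtain ⟨q, hq, hEq⟩ := hmem
    apply hp0
    have h1 : q⁻¹ * p0 ∈ F := by
      rw [← hπker, MonoidHom.mem_ker, map_mul, map_inv, hEq, inv_mul_cancel]
    have h2 : q⁻¹ * p0 ∈ Q := hFQ h1
    have h3 := mul_mem hq h2
    rwa [← mul_assoc, mul_inv_cancel, one_mul] at h3
  obtain ⟨q1, hq1Q, hq1F⟩ : ∃ q1 ∈ Q, p0 * q1 * p0⁻¹ * q1⁻¹ ∉ F := by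
    by_contra h
    push_neg at h
    exact hp0 (hfaithful p0 h)
  have haction : π p0 * π q1 * (π p0)⁻¹ ≠ π q1 := by
    intro h
    apply hq1F
    rw [← hπker, MonoidHom.mem_ker, map_mul, map_mul, map_mul, map_inv, map_inv, h,
      mul_inv_cancel]
  have hq1V : π q1 ∈ V := ⟨q1, hq1Q, rfl⟩
  exact dihedral_of_klein V hVsq hVcomm hVcard2 x0 y0 hVset (π p0) htV (π q1) hq1V haction
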